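/- Let g : [0,1] → ℝ be concave and monotone nondecreasing on [0,1] with g(0) ≥ 0, and let ĝ : [0,1] → ℝ be monotone nondecreasing on [0,1]. Let α > 0, K ≥ 1, and let x, y satisfy 0 < x, y = (1+α) * x, and y ≤ 1. Suppose g(x) ≤ K * ĝ(x) and ĝ(y) ≤ K * g(y). Then for every q ∈ [x, y]: g(q) ≤ K * (1+α) * ĝ(q) and ĝ(q) ≤ K * (1+α) * g(q). -/

import Mathlib

open Set

theorem grid_interpolation_approx
    (g gHat : ℝ → ℝ)
    (hg : ConcaveOn ℝ (Icc (0:ℝ) 1) g)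
    (hgmono : MonotoneOn g (Icc (0:ℝ) 1))
    (hg0 : 0 ≤ g 0)
    (hgHatmono : MonotoneOn gHat (Icc (0:ℝ) 1))
    (α K x y : ℝ) (hα : 0 < α) (hK : 1 ≤ K)
    (hx : 0 < x) (hy : y = (1 + α) * x) (hy1 : y ≤ 1)
    (h1 : g x ≤ K * gHat x) (h2 : gHat y ≤ K * g y) :
    ∀ q ∈ Icc x y, g q ≤ K * (1 + α) * gHat q ∧ gHat q ≤ K * (1 + α) * g q := by
  have h1α : (0:ℝ) < 1 + α := by linarith
  have hxy : x ≤ y := by nlinarith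
  have hx1 : x ≤ 1 := le_trans hxy hy1
  have hy0 : 0 < y := lt_of_lt_of_le hx hxy
  have hxmem : x ∈ Icc (0:ℝ) 1 := ⟨hx.le, hx1⟩
  have hymem : y ∈ Icc (0:ℝ) 1 := ⟨hy0.le, hy1⟩
  have h0mem : (0:ℝ) ∈ Icc (0:ℝ) 1 := ⟨le_refl _, zero_le_one⟩
  have hKpos : (0:ℝ) < K := lt_of_lt_of_le one_pos hK
  -- concavity: g y ≤ (1+α) * g x
  have hconc := hg.2 h0mem hymem (by positivity : (0:ℝ) ≤ α / (1 + α))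
    (by positivity : (0:ℝ) ≤ 1 / (1 + α)) (by field_simp; ring)
  have hxeq : (α / (1 + α)) • (0:ℝ) + (1 / (1 + α)) • y = x := by
    rw [hy]; simp only [smul_eq_mul]; field_simp; ring
  rw [hxeq] at hconc
  have hgyx : g y ≤ (1 + α) * g x := by
    have : (1 / (1 + α)) * g y ≤ g x := by
      have : (0:ℝ) ≤ (α / (1 + α)) * g 0 := by positivity
      simp only [smul_eq_mul] at hconc; linarith
    calc g y = (1 + α) * ((1 / (1 + α)) * g y) := by field_simp
    _ ≤ (1 + α) * g x := by nlinarith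
  intro q hq
  have hqmem : q ∈ Icc (0:ℝ) 1 := ⟨le_trans hx.le hq.1, le_trans hq.2 hy1⟩
  have hgxq : g x ≤ g q := hgmono hxmem hqmem hq.1
  have hgqy : g q ≤ g y := hgmono hqmem hymem hq.2
  have hgHxq : gHat x ≤ gHat q := hgHatmono hxmem hqmem hq.1
  have hgHqy : gHat q ≤ gHat y := hgHatmono hqmem hymem hq.2
  constructor
  · calc g q ≤ g y := hgqy
    _ ≤ (1 + α) * g x := hgyx
    _ ≤ (1 + α) * (K * gHat x) := by nlinarith
    _ ≤ K * (1 + α) * gHat q := by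
      have := mul_le_mul_of_nonneg_left hgHxq (by positivity : (0:ℝ) ≤ K * (1 + α))
      linarith [this]
  · calc gHat q ≤ gHat y := hgHqy
    _ ≤ K * g y := h2
    _ ≤ K * ((1 + α) * g x) := by nlinarith
    _ ≤ K * (1 + α) * g q := by
      have := mul_le_mul_of_nonneg_left hgxq (by positivity : (0:ℝ) ≤ K * (1 + α))
      linarith [this]
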